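/- Under the hypotheses above, the random variable Y_ρ = ‖(1/m)∑_i U_i ρ U_i† − I/d‖₁ satisfies E[Y_ρ] ≤ sqrt(d/m). -/

import Mathlib

open Matrix MeasureTheory ProbabilityTheory ComplexOrder

/-- The trace norm (sum of singular values) of a complex square matrix. -/
noncomputable def traceNorm {n : Type*} [Fintype n] [DecidableEq n] (M : Matrix n n ℂ) : ℝ :=
  ((Matrix.posSemidef_conjTranspose_mul_self M).1.eigenvectorUnitary.1 *
    diagonal (((↑) : ℝ → ℂ) ∘ Real.sqrt ∘ (Matrix.posSemidef_conjTranspose_mul_self M).1.eigenvalues) *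
    (star (Matrix.posSemidef_conjTranspose_mul_self M).1.eigenvectorUnitary : Matrix n n ℂ)).trace.re

/-- The Borel-measurable structure on complex matrices, entrywise. -/
noncomputable instance matrixMeasurableSpace (d : ℕ) : MeasurableSpace (Matrix (Fin d) (Fin d) ℂ) := by
  unfold Matrix; infer_instance

lemma frob_trace (d : ℕ) (M : Matrix (Fin d) (Fin d) ℂ) :
    (Mᴴ * M).trace.re = ∑ j, ∑ k, Complex.normSq (M j k) := by
  have h : (Mᴴ * M).trace = ((∑ j, ∑ k, Complex.normSq (M j k) : ℝ) : ℂ) := by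
    simp only [Matrix.trace, Matrix.diag, Matrix.mul_apply, Matrix.conjTranspose_apply]
    push_cast
    rw [Finset.sum_comm]
    refine Finset.sum_congr rfl fun j _ => Finset.sum_congr rfl fun k _ => ?_
    rw [Complex.star_def, mul_comm, Complex.mul_conj]
  rw [h, Complex.ofReal_re]

lemma traceNorm_key (d : ℕ) (M : Matrix (Fin d) (Fin d) ℂ) :
    0 ≤ traceNorm M ∧
      traceNorm M ≤ Real.sqrt d * Real.sqrt (∑ j, ∑ k, Complex.normSq (M j k)) := by
  classical
  have hP := Matrix.posSemidef_conjTranspose_mul_self M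
  set lam : Fin d → ℝ := fun i => Real.sqrt (hP.1.eigenvalues i) with hlam
  have hU1 : (star (hP.1.eigenvectorUnitary : Matrix (Fin d) (Fin d) ℂ)) *
      (hP.1.eigenvectorUnitary : Matrix (Fin d) (Fin d) ℂ) = 1 :=
    Matrix.mem_unitaryGroup_iff'.mp hP.1.eigenvectorUnitary.2
  have hl0 : ∀ i, 0 ≤ lam i := fun i => Real.sqrt_nonneg _
  have h2 : (Mᴴ * M).trace = ((∑ i, (lam i)^2 : ℝ) : ℂ) := by
    conv_lhs => rw [hP.1.spectral_theorem, Unitary.conjStarAlgAut_apply]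
    rw [Matrix.trace_mul_cycle, hU1, Matrix.one_mul, Matrix.trace_diagonal]
    push_cast
    refine Finset.sum_congr rfl fun i _ => ?_
    simp only [Function.comp_apply, hlam]
    rw [← Complex.ofReal_pow, Real.sq_sqrt (hP.eigenvalues_nonneg i)]
    rfl
  have hTN : traceNorm M = ∑ i, lam i := by
    rw [traceNorm, Matrix.trace_mul_cycle, hU1, Matrix.one_mul, Matrix.trace_diagonal]
    simp [hlam, Function.comp_apply]
  have hfr : ∑ j, ∑ k, Complex.normSq (M j k) = ∑ i, (lam i)^2 := by
    rw [← frob_trace, h2, Complex.ofReal_re]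
  constructor
  · rw [hTN]; exact Finset.sum_nonneg fun i _ => hl0 i
  · rw [hTN, hfr]
    have hcs : (∑ i, lam i)^2 ≤ (d : ℝ) * ∑ i, (lam i)^2 := by
      have := Finset.sum_mul_sq_le_sq_mul_sq Finset.univ (fun _ => (1:ℝ)) lam
      simpa using this
    have h0 : 0 ≤ ∑ i, lam i := Finset.sum_nonneg fun i _ => hl0 i
    calc ∑ i, lam i = Real.sqrt ((∑ i, lam i)^2) := (Real.sqrt_sq h0).symm
      _ ≤ Real.sqrt ((d:ℝ) * ∑ i, (lam i)^2) := Real.sqrt_le_sqrt hcs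
      _ = Real.sqrt d * Real.sqrt (∑ i, (lam i)^2) := Real.sqrt_mul (by positivity) _

lemma entry_eq (d : ℕ) (Um : Matrix (Fin d) (Fin d) ℂ) (v : Fin d → ℂ) (j k : Fin d) :
    (Um * Matrix.vecMulVec v (star v) * Umᴴ) j k
      = (Um.mulVec v) j * (starRingEnd ℂ) ((Um.mulVec v) k) := by
  simp only [Matrix.mul_apply, Matrix.vecMulVec_apply, Matrix.conjTranspose_apply,
    Matrix.mulVec, dotProduct, Pi.star_apply, Complex.star_def, map_sum, _root_.map_mul,
    Finset.sum_mul, Finset.mul_sum]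
  exact Finset.sum_congr rfl fun a _ => Finset.sum_congr rfl fun b _ => by ring

lemma mulVec_normSq {d : ℕ} {Um : Matrix (Fin d) (Fin d) ℂ} (h : Umᴴ * Um = 1)
    (v : Fin d → ℂ) : ∑ j, Complex.normSq ((Um.mulVec v) j) = ∑ j, Complex.normSq (v j) := by
  have h2 : ∀ u : Fin d → ℂ, (star u) ⬝ᵥ u = ((∑ j, Complex.normSq (u j) : ℝ) : ℂ) := by
    intro u
    rw [dotProduct]
    push_cast
    exact Finset.sum_congr rfl fun j _ => by
      rw [Pi.star_apply, Complex.star_def, mul_comm, Complex.mul_conj]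
  have h1 : (star (Um.mulVec v)) ⬝ᵥ (Um.mulVec v) = (star v) ⬝ᵥ v := by
    rw [Matrix.star_mulVec, Matrix.dotProduct_mulVec, Matrix.vecMul_vecMul, h,
      Matrix.vecMul_one]
  rw [h2, h2] at h1
  exact_mod_cast h1

lemma vvPSD (d : ℕ) (v : Fin d → ℂ) : (Matrix.vecMulVec v (star v)).PosSemidef := by
  exact Matrix.posSemidef_vecMulVec_self_star v

lemma vvtrace (d : ℕ) (v : Fin d → ℂ) (hv : ∑ i, Complex.normSq (v i) = 1) :
    (Matrix.vecMulVec v (star v)).trace = 1 := by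
  simp only [Matrix.trace, Matrix.diag, Matrix.vecMulVec_apply, Pi.star_apply, Complex.star_def]
  have h : ∑ i, v i * (starRingEnd ℂ) (v i) = ((∑ i, Complex.normSq (v i) : ℝ) : ℂ) := by
    push_cast
    exact Finset.sum_congr rfl fun i _ => Complex.mul_conj _
  rw [h, hv]
  norm_num

set_option maxHeartbeats 1600000 in
theorem expected_trace_dist_le_sqrt (d m : ℕ) (hd : 0 < d) (hm : 0 < m)
    {Ω : Type*} [MeasurableSpace Ω] (μ : Measure Ω) [IsProbabilityMeasure μ]
    (U : Fin m → Ω → Matrix (Fin d) (Fin d) ℂ)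
    (hmeas : ∀ i, Measurable (U i))
    (hunit : ∀ i ω, (U i ω)ᴴ * U i ω = 1 ∧ U i ω * (U i ω)ᴴ = 1)
    (hindep : iIndepFun U μ)
    (hrand : ∀ i (σ : Matrix (Fin d) (Fin d) ℂ), σ.PosSemidef → σ.trace = 1 →
      ∀ j k, ∫ ω, (U i ω * σ * (U i ω)ᴴ) j k ∂μ = (((d : ℂ)⁻¹ • 1 : Matrix (Fin d) (Fin d) ℂ)) j k)
    (v : Fin d → ℂ) (hv : ∑ i, Complex.normSq (v i) = 1) :
    ∫ ω, traceNorm ((m : ℂ)⁻¹ • (∑ i, U i ω * vecMulVec v (star v) * (U i ω)ᴴ)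
          - (d : ℂ)⁻¹ • 1) ∂μ
      ≤ Real.sqrt ((d : ℝ) / m) := by
  classical
  have hm0 : (m : ℝ) ≠ 0 := Nat.cast_ne_zero.mpr hm.ne'
  set ρ : Matrix (Fin d) (Fin d) ℂ := vecMulVec v (star v) with hrho
  set c : Matrix (Fin d) (Fin d) ℂ := (d : ℂ)⁻¹ • 1 with hcdef
  set w : Fin m → Ω → Fin d → ℂ := fun i ω => (U i ω).mulVec v with hwdef
  -- basic pointwise facts
  have hwnorm : ∀ i ω, ∑ j, Complex.normSq (w i ω j) = 1 := fun i ω =>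
    (mulVec_normSq (hunit i ω).1 v).trans hv
  have hwbound : ∀ i ω j, ‖w i ω j‖ ≤ 1 := by
    intro i ω j
    have h1 : Complex.normSq (w i ω j) ≤ 1 := by
      rw [← hwnorm i ω]
      exact Finset.single_le_sum (fun j _ => Complex.normSq_nonneg _) (Finset.mem_univ j)
    nlinarith [Complex.sq_norm (w i ω j), norm_nonneg (w i ω j)]
  have hAentry : ∀ i ω j k,
      (U i ω * ρ * (U i ω)ᴴ) j k = w i ω j * (starRingEnd ℂ) (w i ω k) :=
    fun i ω j k => entry_eq d (U i ω) v j k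
  have hAbound : ∀ i ω j k, ‖(U i ω * ρ * (U i ω)ᴴ) j k‖ ≤ 1 := by
    intro i ω j k
    rw [hAentry, norm_mul, Complex.norm_conj]
    exact mul_le_one₀ (hwbound i ω j) (norm_nonneg _) (hwbound i ω k)
  have hAsq : ∀ i ω, ∑ j, ∑ k, Complex.normSq ((U i ω * ρ * (U i ω)ᴴ) j k) = 1 := by
    intro i ω
    have h1 : ∀ j k : Fin d, Complex.normSq ((U i ω * ρ * (U i ω)ᴴ) j k)
        = Complex.normSq (w i ω j) * Complex.normSq (w i ω k) := by
      intro j k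
      rw [hAentry, Complex.normSq_mul, Complex.normSq_conj]
    simp only [h1]
    rw [← Finset.sum_mul_sum, hwnorm i ω, one_mul]
  -- measurability
  have hwMeas : ∀ i j, Measurable fun ω => w i ω j := by
    intro i j
    have : (fun ω => w i ω j) = fun ω => ∑ a, U i ω j a * v a := by
      funext ω; rw [hwdef]; rfl
    rw [this]
    exact Finset.measurable_sum _ fun a _ =>
      (((measurable_pi_apply a).comp (measurable_pi_apply j)).comp (hmeas i)).mul
        measurable_const
  have hAMeas : ∀ i j k, Measurable fun ω => (U i ω * ρ * (U i ω)ᴴ) j k := by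
    intro i j k
    simp only [hAentry]
    exact (hwMeas i j).mul ((RCLike.continuous_conj.measurable).comp (hwMeas i k))
  -- integrability helpers
  have intOfBound : ∀ (f : Ω → ℝ) (C : ℝ), Measurable f → (∀ ω, ‖f ω‖ ≤ C) →
      Integrable f μ := fun f C hf hb =>
    ⟨hf.aestronglyMeasurable, HasFiniteIntegral.of_bounded (ae_of_all _ hb)⟩
  have intOfBoundC : ∀ (f : Ω → ℂ) (C : ℝ), Measurable f → (∀ ω, ‖f ω‖ ≤ C) →
      Integrable f μ := fun f C hf hb =>
    ⟨hf.aestronglyMeasurable, HasFiniteIntegral.of_bounded (ae_of_all _ hb)⟩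
  have hAInt : ∀ i j k, Integrable (fun ω => (U i ω * ρ * (U i ω)ᴴ) j k) μ := fun i j k =>
    intOfBoundC _ 1 (hAMeas i j k) (fun ω => by
      exact hAbound i ω j k)
  have hAmean : ∀ i j k, ∫ ω, (U i ω * ρ * (U i ω)ᴴ) j k ∂μ = c j k := fun i j k =>
    hrand i ρ (vvPSD d v) (vvtrace d v hv) j k
  -- real and imaginary parts
  set P : Fin m → Fin d → Fin d → Ω → ℝ :=
    fun i j k ω => ((U i ω * ρ * (U i ω)ᴴ) j k).re with hPdef
  set Q : Fin m → Fin d → Fin d → Ω → ℝ :=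
    fun i j k ω => ((U i ω * ρ * (U i ω)ᴴ) j k).im with hQdef
  have hPMeas : ∀ i j k, Measurable (P i j k) := fun i j k =>
    Complex.measurable_re.comp (hAMeas i j k)
  have hQMeas : ∀ i j k, Measurable (Q i j k) := fun i j k =>
    Complex.measurable_im.comp (hAMeas i j k)
  have hPb : ∀ i j k ω, |P i j k ω| ≤ 1 := fun i j k ω =>
    le_trans (Complex.abs_re_le_norm _) (hAbound i ω j k)
  have hQb : ∀ i j k ω, |Q i j k ω| ≤ 1 := fun i j k ω =>
    le_trans (Complex.abs_im_le_norm _) (hAbound i ω j k)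
  have hPInt : ∀ i j k, Integrable (P i j k) μ := fun i j k =>
    intOfBound _ 1 (hPMeas i j k) (fun ω => hPb i j k ω)
  have hQInt : ∀ i j k, Integrable (Q i j k) μ := fun i j k =>
    intOfBound _ 1 (hQMeas i j k) (fun ω => hQb i j k ω)
  have hPmean : ∀ i j k, ∫ ω, P i j k ω ∂μ = (c j k).re := by
    intro i j k
    have h := integral_re (hAInt i j k)
    rw [hAmean i j k] at h
    simpa using h
  have hQmean : ∀ i j k, ∫ ω, Q i j k ω ∂μ = (c j k).im := by
    intro i j k
    have h := integral_im (hAInt i j k)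
    rw [hAmean i j k] at h
    simpa using h
  -- independence: vanishing cross terms
  have hentMeas : ∀ j k, Measurable fun M : Matrix (Fin d) (Fin d) ℂ => (M * ρ * Mᴴ) j k := by
    intro j k
    show Measurable fun M : Matrix (Fin d) (Fin d) ℂ => ∑ b, (∑ a, M j a * ρ a b) * star (M k b)
    · exact Finset.measurable_sum _ fun b _ =>
        ((Finset.measurable_sum _ fun a _ =>
          ((measurable_pi_apply a).comp (measurable_pi_apply j)).mul measurable_const).mul
          (continuous_star.measurable.comp
            ((measurable_pi_apply b).comp (measurable_pi_apply k))))
  have hcross : ∀ (f : Fin d → Fin d → (ℂ → ℝ)) (hf : ∀ j k, Measurable (f j k))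
      (i i' : Fin m), i ≠ i' → ∀ (j k : Fin d) (a : ℝ),
      (∫ ω, f j k ((U i ω * ρ * (U i ω)ᴴ) j k) - a ∂μ) = 0 →
      (∫ ω, f j k ((U i' ω * ρ * (U i' ω)ᴴ) j k) - a ∂μ) = 0 →
      ∫ ω, (f j k ((U i ω * ρ * (U i ω)ᴴ) j k) - a)
          * (f j k ((U i' ω * ρ * (U i' ω)ᴴ) j k) - a) ∂μ = 0 := by
    intro f hf i i' hne j k a hz1 hz2
    have hUind : IndepFun (U i) (U i') μ := hindep.indepFun hne
    have hphi : Measurable fun M : Matrix (Fin d) (Fin d) ℂ => f j k ((M * ρ * Mᴴ) j k) - a :=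
      ((hf j k).comp (hentMeas j k)).sub measurable_const
    have hind2 : IndepFun (fun ω => f j k ((U i ω * ρ * (U i ω)ᴴ) j k) - a)
        (fun ω => f j k ((U i' ω * ρ * (U i' ω)ᴴ) j k) - a) μ := hUind.comp hphi hphi
    have h := hind2.integral_mul_eq_mul_integral ((hphi.comp (hmeas i)).aestronglyMeasurable)
      ((hphi.comp (hmeas i')).aestronglyMeasurable)
    simp only [Pi.mul_apply] at h
    rw [h, hz1, hz2, mul_zero]
  -- bound on entries of c
  have hcb : ∀ j k, ‖c j k‖ ≤ 1 := by
    intro j k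
    have h1 : c j k = (d : ℂ)⁻¹ * (1 : Matrix (Fin d) (Fin d) ℂ) j k := rfl
    rw [h1, norm_mul]
    have hd1 : ‖(d : ℂ)⁻¹‖ ≤ 1 := by
      rw [norm_inv]
      have h2 : (1 : ℝ) ≤ ‖(d : ℂ)‖ := by
        rw [Complex.norm_natCast]
        exact_mod_cast hd
      exact inv_le_one_of_one_le₀ h2
    have hd2 : ‖(1 : Matrix (Fin d) (Fin d) ℂ) j k‖ ≤ 1 := by
      by_cases h : j = k <;> simp [Matrix.one_apply, h]
    exact mul_le_one₀ hd1 (norm_nonneg _) hd2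
  -- the matrix X
  set X : Ω → Matrix (Fin d) (Fin d) ℂ :=
    fun ω => (m : ℂ)⁻¹ • (∑ i, U i ω * ρ * (U i ω)ᴴ) - c with hXdef
  have hXentryC : ∀ ω j k, X ω j k
      = (m : ℂ)⁻¹ * (∑ i, (U i ω * ρ * (U i ω)ᴴ) j k) - c j k := by
    intro ω j k
    rw [hXdef]
    simp [Matrix.sub_apply, Matrix.smul_apply, Matrix.sum_apply, smul_eq_mul]
  have hmc : ((m : ℂ))⁻¹ = (((m : ℝ)⁻¹ : ℝ) : ℂ) := by push_cast; ring
  have hXre : ∀ ω j k, (X ω j k).re = (m : ℝ)⁻¹ * ∑ i, (P i j k ω - (c j k).re) := by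
    intro ω j k
    rw [hXentryC, Complex.sub_re, hmc, Complex.re_ofReal_mul, Complex.re_sum,
      Finset.sum_sub_distrib, Finset.sum_const, Finset.card_univ, Fintype.card_fin,
      nsmul_eq_mul]
    field_simp
    rfl
  have hXim : ∀ ω j k, (X ω j k).im = (m : ℝ)⁻¹ * ∑ i, (Q i j k ω - (c j k).im) := by
    intro ω j k
    rw [hXentryC, Complex.sub_im, hmc, Complex.im_ofReal_mul, Complex.im_sum,
      Finset.sum_sub_distrib, Finset.sum_const, Finset.card_univ, Fintype.card_fin,
      nsmul_eq_mul]
    field_simp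
    rfl
  have hnormSqX : ∀ ω j k, Complex.normSq (X ω j k)
      = (m : ℝ)⁻¹^2 * ((∑ i, (P i j k ω - (c j k).re))^2
          + (∑ i, (Q i j k ω - (c j k).im))^2) := by
    intro ω j k
    rw [Complex.normSq_apply, hXre, hXim]
    ring
  -- second-moment expansion of a sum of independent centered variables
  have key2 : ∀ (p : Fin m → Ω → ℝ), (∀ i, Measurable (p i)) → (∀ i ω, |p i ω| ≤ 2) →
      (∀ i i', i ≠ i' → ∫ ω, p i ω * p i' ω ∂μ = 0) →
      ∫ ω, (∑ i, p i ω)^2 ∂μ = ∑ i, ∫ ω, (p i ω)^2 ∂μ := by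
    intro p hpm hpb hpcross
    have hint : ∀ i i' : Fin m, Integrable (fun ω => p i ω * p i' ω) μ := by
      intro i i'
      refine intOfBound _ 4 ((hpm i).mul (hpm i')) (fun ω => ?_)
      rw [Real.norm_eq_abs, abs_mul]
      nlinarith [hpb i ω, hpb i' ω, abs_nonneg (p i ω), abs_nonneg (p i' ω)]
    have h1 : ∫ ω, (∑ i, p i ω)^2 ∂μ = ∫ ω, ∑ i, ∑ i', p i ω * p i' ω ∂μ := by
      congr 1; funext ω; rw [pow_two, Finset.sum_mul_sum]
    rw [h1, integral_finset_sum _ (fun i _ => integrable_finset_sum _ fun i' _ => hint i i')]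
    refine Finset.sum_congr rfl fun i _ => ?_
    rw [integral_finset_sum _ (fun i' _ => hint i i'), Finset.sum_eq_single i]
    · congr 1; funext ω; rw [pow_two]
    · exact fun i' _ hne => hpcross i i' (fun h => hne h.symm)
    · intro h; exact absurd (Finset.mem_univ i) h
  -- variance bound
  have hvar : ∀ (f : Ω → ℝ) (a : ℝ), Measurable f → (∀ ω, |f ω| ≤ 1) →
      (∫ ω, f ω ∂μ = a) → ∫ ω, (f ω - a)^2 ∂μ ≤ ∫ ω, (f ω)^2 ∂μ := by
    intro f a hfm hfb hfa
    have hfint : Integrable f μ := intOfBound _ 1 hfm (fun ω => hfb ω)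
    have hf2 : Integrable (fun ω => (f ω)^2) μ := by
      refine intOfBound _ 1 (hfm.pow_const 2) (fun ω => ?_)
      rw [Real.norm_eq_abs, abs_pow]
      nlinarith [hfb ω, abs_nonneg (f ω)]
    have hexp : (fun ω => (f ω - a)^2) = fun ω => ((f ω)^2 - (2*a) * f ω) + a^2 := by
      funext ω; ring
    have hI1 : Integrable (fun ω => f ω ^ 2 - 2 * a * f ω) μ :=
      hf2.sub (hfint.const_mul (2 * a))
    have e1 : ∫ ω, (f ω ^ 2 - 2 * a * f ω) + a ^ 2 ∂μ
        = (∫ ω, f ω ^ 2 - 2 * a * f ω ∂μ) + a ^ 2 := by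
      rw [integral_add hI1 (integrable_const _), integral_const, probReal_univ,
        one_smul]
    have e2 : ∫ ω, f ω ^ 2 - 2 * a * f ω ∂μ
        = (∫ ω, f ω ^ 2 ∂μ) - 2 * a * a := by
      rw [integral_sub hf2 (hfint.const_mul (2 * a)), integral_const_mul, hfa]
    rw [hexp, e1, e2]
    nlinarith [sq_nonneg a]
    -- zero means
  have hzmeanP : ∀ i j k, ∫ ω, P i j k ω - (c j k).re ∂μ = 0 := by
    intro i j k
    rw [integral_sub (hPInt i j k) (integrable_const _), hPmean i j k, integral_const,
      probReal_univ, one_smul, sub_self]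
  have hzmeanQ : ∀ i j k, ∫ ω, Q i j k ω - (c j k).im ∂μ = 0 := by
    intro i j k
    rw [integral_sub (hQInt i j k) (integrable_const _), hQmean i j k, integral_const,
      probReal_univ, one_smul, sub_self]
  have hcrossP : ∀ (i i' : Fin m), i ≠ i' → ∀ j k,
      ∫ ω, (P i j k ω - (c j k).re) * (P i' j k ω - (c j k).re) ∂μ = 0 := by
    intro i i' hne j k
    exact hcross (fun _ _ => Complex.re) (fun _ _ => Complex.measurable_re) i i' hne j k
      ((c j k).re) (hzmeanP i j k) (hzmeanP i' j k)
  have hcrossQ : ∀ (i i' : Fin m), i ≠ i' → ∀ j k,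
      ∫ ω, (Q i j k ω - (c j k).im) * (Q i' j k ω - (c j k).im) ∂μ = 0 := by
    intro i i' hne j k
    exact hcross (fun _ _ => Complex.im) (fun _ _ => Complex.measurable_im) i i' hne j k
      ((c j k).im) (hzmeanQ i j k) (hzmeanQ i' j k)
  -- bounds for centered variables
  have hPsb : ∀ i j k ω, |P i j k ω - (c j k).re| ≤ 2 := by
    intro i j k ω
    have h1 : |(c j k).re| ≤ 1 := le_trans (Complex.abs_re_le_norm _) (hcb j k)
    have h2 := hPb i j k ω
    rw [abs_le] at h1 h2 ⊢
    constructor <;> linarith [h1.1, h1.2, h2.1, h2.2]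
  have hQsb : ∀ i j k ω, |Q i j k ω - (c j k).im| ≤ 2 := by
    intro i j k ω
    have h1 : |(c j k).im| ≤ 1 := le_trans (Complex.abs_im_le_norm _) (hcb j k)
    have h2 := hQb i j k ω
    rw [abs_le] at h1 h2 ⊢
    constructor <;> linarith [h1.1, h1.2, h2.1, h2.2]
  -- integrability of squares
  have hPsqInt : ∀ i j k, Integrable (fun ω => (P i j k ω)^2) μ := fun i j k =>
    intOfBound _ 1 ((hPMeas i j k).pow_const 2) (fun ω => by
      rw [Real.norm_eq_abs, abs_pow]; nlinarith [hPb i j k ω, abs_nonneg (P i j k ω)])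
  have hQsqInt : ∀ i j k, Integrable (fun ω => (Q i j k ω)^2) μ := fun i j k =>
    intOfBound _ 1 ((hQMeas i j k).pow_const 2) (fun ω => by
      rw [Real.norm_eq_abs, abs_pow]; nlinarith [hQb i j k ω, abs_nonneg (Q i j k ω)])
  have hPQInt : ∀ i j k, Integrable (fun ω => (P i j k ω)^2 + (Q i j k ω)^2) μ :=
    fun i j k => (hPsqInt i j k).add (hQsqInt i j k)
  -- measurability of X entries
  have hXMeas : ∀ j k, Measurable fun ω => X ω j k := by
    intro j k
    have h : (fun ω => X ω j k)
        = fun ω => (m : ℂ)⁻¹ * (∑ i, (U i ω * ρ * (U i ω)ᴴ) j k) - c j k := by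
      funext ω; rw [hXentryC]
    rw [h]
    exact ((Finset.measurable_sum _ fun i _ => hAMeas i j k).const_mul _).sub measurable_const
  have hXb : ∀ ω j k, ‖X ω j k‖ ≤ 2 := by
    intro ω j k
    rw [hXentryC]
    have h2 : ‖∑ i, (U i ω * ρ * (U i ω)ᴴ) j k‖ ≤ m := by
      calc ‖∑ i, (U i ω * ρ * (U i ω)ᴴ) j k‖
          ≤ ∑ i : Fin m, ‖(U i ω * ρ * (U i ω)ᴴ) j k‖ := norm_sum_le _ _
        _ ≤ ∑ _i : Fin m, (1:ℝ) := Finset.sum_le_sum fun i _ => hAbound i ω j k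
        _ = m := by simp
    have h1 : ‖(m:ℂ)⁻¹ * ∑ i, (U i ω * ρ * (U i ω)ᴴ) j k‖ ≤ 1 := by
      rw [norm_mul, norm_inv, Complex.norm_natCast]
      calc (m:ℝ)⁻¹ * ‖∑ i, (U i ω * ρ * (U i ω)ᴴ) j k‖
          ≤ (m:ℝ)⁻¹ * m := mul_le_mul_of_nonneg_left h2 (by positivity)
        _ = 1 := by field_simp
    have h3 := norm_sub_le ((m:ℂ)⁻¹ * ∑ i, (U i ω * ρ * (U i ω)ᴴ) j k) (c j k)
    linarith [hcb j k]
  have hnormSqXb : ∀ ω j k, Complex.normSq (X ω j k) ≤ 4 := by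
    intro ω j k
    rw [← Complex.sq_norm]
    nlinarith [hXb ω j k, norm_nonneg (X ω j k)]
  have hnormSqXInt : ∀ j k, Integrable (fun ω => Complex.normSq (X ω j k)) μ := by
    intro j k
    refine intOfBound _ 4 (Complex.continuous_normSq.measurable.comp (hXMeas j k)) (fun ω => ?_)
    rw [Real.norm_eq_abs, abs_of_nonneg (Complex.normSq_nonneg _)]
    exact hnormSqXb ω j k
  -- the per-entry second moment bound
  have claimjk : ∀ j k, ∫ ω, Complex.normSq (X ω j k) ∂μ
      ≤ (m : ℝ)⁻¹ ^ 2 * ∑ i, ∫ ω, (P i j k ω)^2 + (Q i j k ω)^2 ∂μ := by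
    intro j k
    have hmP : ∀ i, Measurable fun ω => P i j k ω - (c j k).re :=
      fun i => (hPMeas i j k).sub measurable_const
    have hmQ : ∀ i, Measurable fun ω => Q i j k ω - (c j k).im :=
      fun i => (hQMeas i j k).sub measurable_const
    have hp := key2 (fun i ω => P i j k ω - (c j k).re) hmP (fun i ω => hPsb i j k ω)
      (fun i i' hne => hcrossP i i' hne j k)
    have hq := key2 (fun i ω => Q i j k ω - (c j k).im) hmQ (fun i ω => hQsb i j k ω)
      (fun i i' hne => hcrossQ i i' hne j k)
    have hSPint : Integrable (fun ω => (∑ i, (P i j k ω - (c j k).re))^2) μ := by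
      refine intOfBound _ ((2*m)^2)
        ((Finset.measurable_sum _ fun i _ => hmP i).pow_const 2) (fun ω => ?_)
      rw [Real.norm_eq_abs, abs_pow]
      have h1 : |∑ i, (P i j k ω - (c j k).re)| ≤ 2*m := by
        calc |∑ i, (P i j k ω - (c j k).re)|
            ≤ ∑ i : Fin m, |P i j k ω - (c j k).re| := Finset.abs_sum_le_sum_abs _ _
          _ ≤ ∑ _i : Fin m, (2:ℝ) := Finset.sum_le_sum fun i _ => hPsb i j k ω
          _ = 2*m := by simp [mul_comm]
      nlinarith [abs_nonneg (∑ i, (P i j k ω - (c j k).re))]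
    have hSQint : Integrable (fun ω => (∑ i, (Q i j k ω - (c j k).im))^2) μ := by
      refine intOfBound _ ((2*m)^2)
        ((Finset.measurable_sum _ fun i _ => hmQ i).pow_const 2) (fun ω => ?_)
      rw [Real.norm_eq_abs, abs_pow]
      have h1 : |∑ i, (Q i j k ω - (c j k).im)| ≤ 2*m := by
        calc |∑ i, (Q i j k ω - (c j k).im)|
            ≤ ∑ i : Fin m, |Q i j k ω - (c j k).im| := Finset.abs_sum_le_sum_abs _ _
          _ ≤ ∑ _i : Fin m, (2:ℝ) := Finset.sum_le_sum fun i _ => hQsb i j k ω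
          _ = 2*m := by simp [mul_comm]
      nlinarith [abs_nonneg (∑ i, (Q i j k ω - (c j k).im))]
    have e0 : ∫ ω, Complex.normSq (X ω j k) ∂μ
        = (m:ℝ)⁻¹^2 * ((∫ ω, (∑ i, (P i j k ω - (c j k).re))^2 ∂μ)
            + ∫ ω, (∑ i, (Q i j k ω - (c j k).im))^2 ∂μ) := by
      rw [← integral_add hSPint hSQint, ← integral_const_mul]
      exact integral_congr_ae (ae_of_all _ fun ω => hnormSqX ω j k)
    rw [e0, hp, hq]
    have hle : ∀ i : Fin m,
        (∫ ω, (P i j k ω - (c j k).re)^2 ∂μ) + (∫ ω, (Q i j k ω - (c j k).im)^2 ∂μ)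
          ≤ ∫ ω, (P i j k ω)^2 + (Q i j k ω)^2 ∂μ := by
      intro i
      have h1 := hvar (P i j k) ((c j k).re) (hPMeas i j k) (hPb i j k) (hPmean i j k)
      have h2 := hvar (Q i j k) ((c j k).im) (hQMeas i j k) (hQb i j k) (hQmean i j k)
      have h3 : ∫ ω, (P i j k ω)^2 + (Q i j k ω)^2 ∂μ
          = (∫ ω, (P i j k ω)^2 ∂μ) + ∫ ω, (Q i j k ω)^2 ∂μ :=
        integral_add (hPsqInt i j k) (hQsqInt i j k)
      linarith
    have hcomb : (∑ i, ∫ ω, (P i j k ω - (c j k).re)^2 ∂μ)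
        + (∑ i, ∫ ω, (Q i j k ω - (c j k).im)^2 ∂μ)
        ≤ ∑ i, ∫ ω, (P i j k ω)^2 + (Q i j k ω)^2 ∂μ := by
      rw [← Finset.sum_add_distrib]
      exact Finset.sum_le_sum fun i _ => hle i
    exact mul_le_mul_of_nonneg_left hcomb (by positivity)
  -- each unitary contributes total second moment 1
  have hsum1 : ∀ i, ∑ j, ∑ k, ∫ ω, (P i j k ω)^2 + (Q i j k ω)^2 ∂μ = 1 := by
    intro i
    have e1 : ∫ ω, ∑ j, ∑ k, ((P i j k ω)^2 + (Q i j k ω)^2) ∂μ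
        = ∑ j, ∑ k, ∫ ω, (P i j k ω)^2 + (Q i j k ω)^2 ∂μ := by
      rw [integral_finset_sum _ (fun j _ => integrable_finset_sum _ fun k _ => hPQInt i j k)]
      exact Finset.sum_congr rfl fun j _ => integral_finset_sum _ fun k _ => hPQInt i j k
    rw [← e1]
    have hpt : ∀ ω, ∑ j, ∑ k, ((P i j k ω)^2 + (Q i j k ω)^2) = 1 := by
      intro ω
      rw [← hAsq i ω]
      refine Finset.sum_congr rfl fun j _ => Finset.sum_congr rfl fun k _ => ?_
      simp only [hPdef, hQdef, Complex.normSq_apply]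
      ring
    calc ∫ ω, ∑ j, ∑ k, ((P i j k ω)^2 + (Q i j k ω)^2) ∂μ
        = ∫ _ω, (1:ℝ) ∂μ := integral_congr_ae (ae_of_all _ hpt)
      _ = 1 := by simp
  -- expected Frobenius norm squared bound
  have hswap : ∀ (T : Fin m → Fin d → Fin d → ℝ),
      (∑ j, ∑ k, ∑ i, T i j k) = ∑ i, ∑ j, ∑ k, T i j k := by
    intro T
    have h1 : (∑ j, ∑ k, ∑ i, T i j k) = ∑ j, ∑ i, ∑ k, T i j k :=
      Finset.sum_congr rfl fun j _ => Finset.sum_comm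
    rw [h1, Finset.sum_comm]
  have hgle : ∫ ω, ∑ j, ∑ k, Complex.normSq (X ω j k) ∂μ ≤ (m:ℝ)⁻¹ := by
    have e1 : ∫ ω, ∑ j, ∑ k, Complex.normSq (X ω j k) ∂μ
        = ∑ j, ∑ k, ∫ ω, Complex.normSq (X ω j k) ∂μ := by
      rw [integral_finset_sum _ (fun j _ => integrable_finset_sum _ fun k _ => hnormSqXInt j k)]
      exact Finset.sum_congr rfl fun j _ => integral_finset_sum _ fun k _ => hnormSqXInt j k
    rw [e1]
    have e2 : ∑ j, ∑ k, ∫ ω, Complex.normSq (X ω j k) ∂μ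
        ≤ ∑ j : Fin d, ∑ k : Fin d,
            (m:ℝ)⁻¹^2 * ∑ i, ∫ ω, (P i j k ω)^2 + (Q i j k ω)^2 ∂μ :=
      Finset.sum_le_sum fun j _ => Finset.sum_le_sum fun k _ => claimjk j k
    refine le_trans e2 ?_
    have e3 : ∑ j : Fin d, ∑ k : Fin d,
          (m:ℝ)⁻¹^2 * ∑ i, ∫ ω, (P i j k ω)^2 + (Q i j k ω)^2 ∂μ
        = (m:ℝ)⁻¹^2 * ∑ i : Fin m, ∑ j, ∑ k, ∫ ω, (P i j k ω)^2 + (Q i j k ω)^2 ∂μ := by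
      calc ∑ j : Fin d, ∑ k : Fin d,
            (m:ℝ)⁻¹^2 * ∑ i, ∫ ω, (P i j k ω)^2 + (Q i j k ω)^2 ∂μ
          = ∑ j : Fin d, (m:ℝ)⁻¹^2 * ∑ k : Fin d,
              ∑ i, ∫ ω, (P i j k ω)^2 + (Q i j k ω)^2 ∂μ :=
            Finset.sum_congr rfl fun j _ => by rw [← Finset.mul_sum]
        _ = (m:ℝ)⁻¹^2 * ∑ j : Fin d, ∑ k : Fin d,
              ∑ i, ∫ ω, (P i j k ω)^2 + (Q i j k ω)^2 ∂μ := by rw [← Finset.mul_sum]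
        _ = (m:ℝ)⁻¹^2 * ∑ i : Fin m, ∑ j, ∑ k,
              ∫ ω, (P i j k ω)^2 + (Q i j k ω)^2 ∂μ := by rw [hswap]
    rw [e3]
    have e4 : ∑ i : Fin m, ∑ j, ∑ k, ∫ ω, (P i j k ω)^2 + (Q i j k ω)^2 ∂μ = (m:ℝ) := by
      rw [Finset.sum_congr rfl fun i _ => hsum1 i]
      simp
    rw [e4, pow_two]
    field_simp
    exact le_refl _
  -- final chain via Cauchy-Schwarz (variance) and the trace-norm bound
  have hgnn : ∀ ω, (0:ℝ) ≤ ∑ j, ∑ k, Complex.normSq (X ω j k) := fun ω =>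
    Finset.sum_nonneg fun j _ => Finset.sum_nonneg fun k _ => Complex.normSq_nonneg _
  have hgmeas : Measurable fun ω => ∑ j, ∑ k, Complex.normSq (X ω j k) :=
    Finset.measurable_sum _ fun j _ => Finset.measurable_sum _ fun k _ =>
      Complex.continuous_normSq.measurable.comp (hXMeas j k)
  have hgb : ∀ ω, ∑ j, ∑ k, Complex.normSq (X ω j k) ≤ 4 * (d:ℝ)^2 := by
    intro ω
    calc ∑ j, ∑ k, Complex.normSq (X ω j k) ≤ ∑ _j : Fin d, ∑ _k : Fin d, (4:ℝ) :=
          Finset.sum_le_sum fun j _ => Finset.sum_le_sum fun k _ => hnormSqXb ω j k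
      _ = 4 * (d:ℝ)^2 := by simp [pow_two]; ring
  set Y : Ω → ℝ := fun ω => Real.sqrt (∑ j, ∑ k, Complex.normSq (X ω j k)) with hYdef
  have hYmeas : Measurable Y := Real.continuous_sqrt.measurable.comp hgmeas
  have hYb : ∀ ω, ‖Y ω‖ ≤ Real.sqrt (4 * (d:ℝ)^2) := by
    intro ω
    rw [Real.norm_eq_abs, abs_of_nonneg (Real.sqrt_nonneg _)]
    exact Real.sqrt_le_sqrt (hgb ω)
  have hYint : Integrable Y μ := intOfBound _ _ hYmeas hYb
  have hY2 : MemLp Y 2 μ :=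
    (memLp_top_of_bound hYmeas.aestronglyMeasurable _ (ae_of_all _ hYb)).mono_exponent
      le_top
  have hvarY := variance_nonneg Y μ
  rw [variance_eq_sub hY2] at hvarY
  have hYsq : μ[Y ^ 2] = ∫ ω, ∑ j, ∑ k, Complex.normSq (X ω j k) ∂μ := by
    refine integral_congr_ae (ae_of_all _ fun ω => ?_)
    simp only [Pi.pow_apply, hYdef]
    exact Real.sq_sqrt (hgnn ω)
  rw [hYsq] at hvarY
  have hEYnn : 0 ≤ ∫ ω, Y ω ∂μ := integral_nonneg fun ω => Real.sqrt_nonneg _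
  have hEY2 : (∫ ω, Y ω ∂μ)^2 ≤ (m:ℝ)⁻¹ := by
    have : μ[Y] = ∫ ω, Y ω ∂μ := rfl
    nlinarith [hgle, hvarY]
  have hEY : ∫ ω, Y ω ∂μ ≤ Real.sqrt ((m:ℝ)⁻¹) := by
    rw [show ∫ ω, Y ω ∂μ = Real.sqrt ((∫ ω, Y ω ∂μ)^2) from (Real.sqrt_sq hEYnn).symm]
    exact Real.sqrt_le_sqrt hEY2
  have hmain : ∫ ω, traceNorm (X ω) ∂μ ≤ Real.sqrt ((d:ℝ)/m) := by
    have hint2 : Integrable (fun ω => Real.sqrt d * Y ω) μ := hYint.const_mul _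
    calc ∫ ω, traceNorm (X ω) ∂μ ≤ ∫ ω, Real.sqrt d * Y ω ∂μ :=
          integral_mono_of_nonneg (ae_of_all _ fun ω => (traceNorm_key d (X ω)).1) hint2
            (ae_of_all _ fun ω => (traceNorm_key d (X ω)).2)
      _ = Real.sqrt d * ∫ ω, Y ω ∂μ := by rw [integral_const_mul]
      _ ≤ Real.sqrt d * Real.sqrt ((m:ℝ)⁻¹) :=
          mul_le_mul_of_nonneg_left hEY (Real.sqrt_nonneg _)
      _ = Real.sqrt ((d:ℝ)/m) := by
          rw [← Real.sqrt_mul (by positivity : (0:ℝ) ≤ (d:ℝ)), div_eq_mul_inv]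
  exact hmain
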